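/- Let S be a nonempty finite set of n elements (points of a metric space with metric d), fix a real l ≥ 0, and call an ordered r-tuple (w₁,...,w_r) of elements of S 'clustered' if for each index i there exists j ≠ i with d(w_i, w_j) ≤ l. Suppose moreover that for every point w ∈ S, the number of w' ∈ S with d(w,w') ≤ 2l is at most B. Then the number of clustered r-tuples is at most (4·B·n·r)^{r/2} for every even positive integer r. -/

import Mathlib

open Finset

lemma chain_count {X : Type*} [DecidableEq X] :
    ∀ (r : ℕ) (S : Finset X) (P : Fin r → (Fin r → X) → Finset X)
      (_hP : ∀ (i : Fin r) (w w' : Fin r → X), (∀ j, j < i → w j = w' j) → P i w = P i w')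
      (c : Fin r → ℕ)
      (_hc : ∀ (i : Fin r) (w : Fin r → X), (∀ j, j < i → w j ∈ S) → (P i w).card ≤ c i),
      ((Fintype.piFinset fun _ => S).filter (fun w => ∀ i, w i ∈ P i w)).card ≤ ∏ i, c i := by
  intro r
  induction r with
  | zero =>
    intro S P hP c hc
    calc (Finset.filter _ _).card ≤ (Fintype.piFinset fun _ : Fin 0 => S).card :=
          Finset.card_filter_le _ _
      _ ≤ ∏ i : Fin 0, c i := by simp [Fintype.card_piFinset]
  | succ r ih =>
    intro S P hP c hc
    set F := ((Fintype.piFinset fun _ : Fin (r+1) => S).filter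
        (fun w => ∀ i, w i ∈ P i w)) with hFdef
    by_cases hX : Nonempty X
    · obtain ⟨x₀⟩ := hX
      set P0 : Finset X := P 0 (fun _ => x₀) with hP0def
      have hP0' : ∀ w : Fin (r+1) → X, P 0 w = P0 := by
        intro w
        exact hP 0 w _ (fun j hj => absurd hj (by simp [Fin.lt_def]))
      set t : Finset X := S.filter (· ∈ P0) with htdef
      have htc : t.card ≤ c 0 := by
        calc t.card ≤ P0.card := Finset.card_le_card (by intro x hx; exact (Finset.mem_filter.1 hx).2)
          _ ≤ c 0 := hc 0 _ (fun j hj => absurd hj (by simp [Fin.lt_def]))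
      have hmap : ∀ w ∈ F, w 0 ∈ t := by
        intro w hw
        rw [hFdef, Finset.mem_filter, Fintype.mem_piFinset] at hw
        exact Finset.mem_filter.2 ⟨hw.1 0, by rw [← hP0']; exact hw.2 0⟩
      rw [Finset.card_eq_sum_card_fiberwise hmap]
      have hfiber : ∀ x ∈ t, (F.filter (fun w => w 0 = x)).card ≤ ∏ i : Fin r, c i.succ := by
        intro x hx
        have hxS : x ∈ S := (Finset.mem_filter.1 hx).1
        set P' : Fin r → (Fin r → X) → Finset X := fun i v => P i.succ (Fin.cons x v) with hP'def
        have hP'h : ∀ (i : Fin r) (v v' : Fin r → X), (∀ j, j < i → v j = v' j) →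
            P' i v = P' i v' := by
          intro i v v' h
          apply hP
          intro j hj
          rcases Fin.eq_zero_or_eq_succ j with h0 | ⟨j', rfl⟩
          · subst h0; simp
          · simp only [Fin.cons_succ]
            exact h j' (Fin.succ_lt_succ_iff.1 hj)
        have hc'h : ∀ (i : Fin r) (v : Fin r → X), (∀ j, j < i → v j ∈ S) →
            (P' i v).card ≤ c i.succ := by
          intro i v h
          apply hc
          intro j hj
          rcases Fin.eq_zero_or_eq_succ j with h0 | ⟨j', rfl⟩
          · subst h0; simpa using hxS
          · simp only [Fin.cons_succ]
            exact h j' (Fin.succ_lt_succ_iff.1 hj)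
        have key := ih S P' hP'h (fun i => c i.succ) hc'h
        refine le_trans ?_ key
        apply Finset.card_le_card_of_injOn (fun w => Fin.tail w)
        · intro w hw
          rw [Finset.mem_coe, Finset.mem_filter] at hw
          obtain ⟨hwF, hw0⟩ := hw
          rw [hFdef, Finset.mem_filter, Fintype.mem_piFinset] at hwF
          obtain ⟨hwS, hwP⟩ := hwF
          rw [Finset.mem_coe, Finset.mem_filter, Fintype.mem_piFinset]
          constructor
          · intro i; exact hwS i.succ
          · intro i
            have hcons : Fin.cons x (Fin.tail w) = w := by
              rw [← hw0]; exact Fin.cons_self_tail w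
            show Fin.tail w i ∈ P i.succ (Fin.cons x (Fin.tail w))
            rw [hcons]
            exact hwP i.succ
        · intro w hw w' hw' h
          rw [Finset.mem_coe, Finset.mem_filter] at hw hw'
          funext j
          rcases Fin.eq_zero_or_eq_succ j with h0 | ⟨j', rfl⟩
          · subst h0; rw [hw.2, hw'.2]
          · exact congrFun h j'
      calc ∑ x ∈ t, (F.filter (fun w => w 0 = x)).card
          ≤ ∑ _x ∈ t, ∏ i : Fin r, c i.succ := Finset.sum_le_sum hfiber
        _ = t.card * ∏ i : Fin r, c i.succ := by rw [Finset.sum_const, smul_eq_mul]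
        _ ≤ c 0 * ∏ i : Fin r, c i.succ := Nat.mul_le_mul_right _ htc
        _ = ∏ i : Fin (r+1), c i := (Fin.prod_univ_succ c).symm
    · have : F = ∅ := by
        apply Finset.eq_empty_of_forall_notMem
        intro w hw
        exact hX ⟨w 0⟩
      rw [this]
      simp


/-- Lemma 3.1 (abstract version): in a finite set `S` of `n` points of a metric
space in which every closed ball of radius `2l` centred at a point of `S`
contains at most `B` points of `S`, the number of ordered `r`-tuples
`(w₁,…,w_r)` of points of `S` such that every `w_i` is within distance `l` of
some `w_j`, `j ≠ i`, is at most `(4·B·n·r)^{r/2}` for even positive `r`. -/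
theorem card_clustered_tuples_le {X : Type*} [MetricSpace X]
    (S : Finset X) (hS : S.Nonempty) (n : ℕ) (hn : S.card = n)
    (l : ℝ) (hl : 0 ≤ l) (B : ℕ)
    (hB : ∀ w ∈ S, (S.filter (fun w' => dist w w' ≤ 2 * l)).card ≤ B)
    (r : ℕ) (hr : Even r) (hrpos : 0 < r) :
    {w : Fin r → X | (∀ i, w i ∈ S) ∧
        ∀ i, ∃ j, j ≠ i ∧ dist (w i) (w j) ≤ l}.Finite ∧
      {w : Fin r → X | (∀ i, w i ∈ S) ∧
        ∀ i, ∃ j, j ≠ i ∧ dist (w i) (w j) ≤ l}.ncard ≤ (4 * B * n * r) ^ (r / 2) := by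
  classical
  set T := (Fintype.piFinset fun _ : Fin r => S).filter
      (fun w => ∀ i, ∃ j, j ≠ i ∧ dist (w i) (w j) ≤ l) with hT
  have hset : {w : Fin r → X | (∀ i, w i ∈ S) ∧
      ∀ i, ∃ j, j ≠ i ∧ dist (w i) (w j) ≤ l} = ↑T := by
    ext w
    simp [hT, Fintype.mem_piFinset]
  rw [hset, Set.ncard_coe_finset]
  refine ⟨T.finite_toSet, ?_⟩
  obtain ⟨k, hk⟩ := hr
  have hrk : r / 2 = k := by omega
  have hn1 : 1 ≤ n := by
    rw [← hn]; exact Finset.card_pos.2 hS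
  have hB1 : 1 ≤ B := by
    obtain ⟨w, hw⟩ := hS
    refine le_trans ?_ (hB w hw)
    refine Finset.card_pos.2 ⟨w, Finset.mem_filter.2 ⟨hw, ?_⟩⟩
    rw [dist_self]; linarith
  by_cases hcase : n ≤ 4 * B * r
  · calc T.card ≤ (Fintype.piFinset fun _ : Fin r => S).card := Finset.card_filter_le _ _
      _ = n ^ r := by simp [Fintype.card_piFinset, hn]
      _ = (n * n) ^ k := by rw [hk, mul_pow, ← pow_add]
      _ ≤ (4 * B * n * r) ^ k := by
          apply Nat.pow_le_pow_left
          calc n * n ≤ n * (4 * B * r) := Nat.mul_le_mul_left n hcase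
            _ = 4 * B * n * r := by ring
      _ = (4 * B * n * r) ^ (r / 2) := by rw [hrk]
  · push_neg at hcase
    have hrBn : r * B ≤ n := by
      have h1 : r * B ≤ 4 * B * r := by nlinarith
      omega
    set PA : Finset (Fin r) → Fin r → (Fin r → X) → Finset X := fun A i w =>
      if i ∈ A then S else ((Finset.univ.filter (fun j => j < i)).biUnion
        fun j => S.filter (fun x => dist x (w j) ≤ 2 * l)) with hPA
    set TA : Finset (Fin r) → Finset (Fin r → X) := fun A =>
      (Fintype.piFinset fun _ : Fin r => S).filter (fun w => ∀ i, w i ∈ PA A i w) with hTA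
    set 𝒜 := (Finset.univ : Finset (Fin r)).powerset.filter (fun A => A.card ≤ k) with h𝒜
    have hsubset : T ⊆ 𝒜.biUnion TA := by
      intro w hw
      rw [hT, Finset.mem_filter, Fintype.mem_piFinset] at hw
      obtain ⟨hwS, hwQ⟩ := hw
      set A := Finset.univ.filter
          (fun i : Fin r => ∀ j, j < i → 2 * l < dist (w i) (w j)) with hA
      choose p hp1 hp2 using hwQ
      have hmapsto : ∀ i ∈ A, p i ∈ Finset.univ \ A := by
        intro i hi
        rw [hA, Finset.mem_filter] at hi
        rw [Finset.mem_sdiff]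
        refine ⟨Finset.mem_univ _, fun hpi => ?_⟩
        rw [hA, Finset.mem_filter] at hpi
        rcases lt_trichotomy (p i) i with hlt | heq | hgt
        · have h1 := hi.2 (p i) hlt
          have h2 := hp2 i
          linarith
        · exact hp1 i heq
        · have h1 := hpi.2 i hgt
          rw [dist_comm] at h1
          have h2 := hp2 i
          linarith
      have haux : ∀ i i', i ∈ A → i' ∈ A → i < i' → p i ≠ p i' := by
        intro i i' hi hi' hlt he
        rw [hA, Finset.mem_filter] at hi'
        have d1 := hp2 i
        have d2 := hp2 i'
        rw [he] at d1
        have hd : dist (w i') (w i) ≤ 2 * l := by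
          calc dist (w i') (w i) ≤ dist (w i') (w (p i')) + dist (w (p i')) (w i) :=
                dist_triangle _ _ _
            _ ≤ l + l := add_le_add d2 (by rw [dist_comm]; exact d1)
            _ = 2 * l := by ring
        have := hi'.2 i hlt
        linarith
      have hinj : Set.InjOn p ↑A := by
        intro i hi i' hi' he
        by_contra hne
        rcases Ne.lt_or_gt hne with hlt | hlt
        · exact haux i i' (Finset.mem_coe.1 hi) (Finset.mem_coe.1 hi') hlt he
        · exact haux i' i (Finset.mem_coe.1 hi') (Finset.mem_coe.1 hi) hlt he.symm
      have hAcard : A.card ≤ k := by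
        have hle := Finset.card_le_card_of_injOn p hmapsto hinj
        rw [Finset.card_sdiff_of_subset (Finset.subset_univ A), Finset.card_univ,
          Fintype.card_fin] at hle
        omega
      rw [Finset.mem_biUnion]
      refine ⟨A, ?_, ?_⟩
      · rw [h𝒜, Finset.mem_filter]
        exact ⟨Finset.mem_powerset.2 (Finset.subset_univ A), hAcard⟩
      · rw [hTA]
        rw [Finset.mem_filter, Fintype.mem_piFinset]
        refine ⟨hwS, fun i => ?_⟩
        by_cases hiA : i ∈ A
        · simp only [hPA, if_pos hiA]; exact hwS i
        · simp only [hPA, if_neg hiA]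
          rw [hA, Finset.mem_filter] at hiA
          push_neg at hiA
          obtain ⟨j, hji, hdist⟩ := hiA (Finset.mem_univ i)
          rw [Finset.mem_biUnion]
          exact ⟨j, Finset.mem_filter.2 ⟨Finset.mem_univ j, hji⟩,
            Finset.mem_filter.2 ⟨hwS i, hdist⟩⟩
    have hTA_bound : ∀ A ∈ 𝒜, (TA A).card ≤ n ^ k * (r * B) ^ k := by
      intro A hA𝒜
      rw [h𝒜, Finset.mem_filter] at hA𝒜
      have hAk : A.card ≤ k := hA𝒜.2
      have hchain := chain_count r S (PA A)
        (by
          intro i w w' hagree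
          simp only [hPA]
          by_cases hiA : i ∈ A
          · rw [if_pos hiA, if_pos hiA]
          · rw [if_neg hiA, if_neg hiA]
            apply Finset.biUnion_congr rfl
            intro j hj
            rw [hagree j (Finset.mem_filter.1 hj).2])
        (fun i => if i ∈ A then n else r * B)
        (by
          intro i w hwS
          simp only [hPA]
          by_cases hiA : i ∈ A
          · rw [if_pos hiA, if_pos hiA]; exact hn.le
          · rw [if_neg hiA, if_neg hiA]
            calc ((Finset.univ.filter (fun j => j < i)).biUnion
                  fun j => S.filter (fun x => dist x (w j) ≤ 2 * l)).card
                ≤ ∑ j ∈ Finset.univ.filter (fun j => j < i),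
                    (S.filter (fun x => dist x (w j) ≤ 2 * l)).card :=
                  Finset.card_biUnion_le
              _ ≤ ∑ _j ∈ Finset.univ.filter (fun j => j < i), B := by
                  apply Finset.sum_le_sum
                  intro j hj
                  have hjS : w j ∈ S := hwS j (Finset.mem_filter.1 hj).2
                  have heq : S.filter (fun x => dist x (w j) ≤ 2 * l)
                      = S.filter (fun x => dist (w j) x ≤ 2 * l) :=
                    Finset.filter_congr (fun x _ => by rw [dist_comm])
                  rw [heq]
                  exact hB (w j) hjS
              _ = (Finset.univ.filter (fun j => j < i)).card * B := by
                  rw [Finset.sum_const, smul_eq_mul]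
              _ ≤ r * B := by
                  apply Nat.mul_le_mul_right
                  calc (Finset.univ.filter (fun j => j < i)).card
                      ≤ (Finset.univ : Finset (Fin r)).card := Finset.card_filter_le _ _
                    _ = r := by rw [Finset.card_univ, Fintype.card_fin])
      refine le_trans hchain ?_
      have hprod : (∏ i : Fin r, if i ∈ A then n else r * B)
          = n ^ A.card * (r * B) ^ (r - A.card) := by
        rw [Finset.prod_ite, Finset.prod_const, Finset.prod_const]
        congr 2
        · simp
        · rw [Finset.filter_not, Finset.card_sdiff_of_subset (Finset.filter_subset _ _)]
          congr 1
          · rw [Finset.card_univ, Fintype.card_fin]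
          · simp
      rw [hprod]
      have e1 : r - A.card = (k - A.card) + k := by clear hchain hprod; omega
      rw [e1, pow_add, ← mul_assoc]
      calc n ^ A.card * (r * B) ^ (k - A.card) * (r * B) ^ k
          ≤ n ^ A.card * n ^ (k - A.card) * (r * B) ^ k := by
            gcongr
        _ = n ^ k * (r * B) ^ k := by
            rw [← pow_add]
            congr 2
            exact Nat.add_sub_cancel' hAk
    calc T.card ≤ (𝒜.biUnion TA).card := Finset.card_le_card hsubset
      _ ≤ ∑ A ∈ 𝒜, (TA A).card := Finset.card_biUnion_le
      _ ≤ ∑ _A ∈ 𝒜, n ^ k * (r * B) ^ k := Finset.sum_le_sum hTA_bound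
      _ = 𝒜.card * (n ^ k * (r * B) ^ k) := by rw [Finset.sum_const, smul_eq_mul]
      _ ≤ 2 ^ r * (n ^ k * (r * B) ^ k) := by
          apply Nat.mul_le_mul_right
          calc 𝒜.card ≤ (Finset.univ : Finset (Fin r)).powerset.card :=
                Finset.card_le_card (Finset.filter_subset _ _)
            _ = 2 ^ r := by rw [Finset.card_powerset, Finset.card_univ, Fintype.card_fin]
      _ = (4 * B * n * r) ^ (r / 2) := by
          have h4 : (2 : ℕ) ^ r = 4 ^ k := by
            rw [hk, show (4 : ℕ) = 2 * 2 from rfl, mul_pow, pow_add]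
          rw [hrk, h4, ← mul_pow, ← mul_pow]
          congr 1
          ring
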